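/- For finite X, iter(h) agrees with the explicitly recursive version: iter(h) = iter'(h)(∅), where iter'(h) : 2^X → X → ⊥ + E is defined by iter'(h)(M)(x) = ⊥ if x ∈ M; iter'(h)(M)(x) = h(x) if x ∉ M and h(x) ∈ ⊥ + E; and iter'(h)(M)(x) = iter'(h)(M ∪ {x})(h(x)) if x ∉ M and h(x) ∈ X. -/

import Mathlib

/-- The iteration functional: `F(f)(x) = f(h(x))` if `h(x) ∈ X`, else `h(x)`.
Values in `X → Option (X ⊕ E)`: `none` is ⊥, `some (inl x)` is a value in `X`,
`some (inr e)` is an exit result in `E`. -/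
def IterF {X E : Type*} (h : X → Option (X ⊕ E)) (f : X → Option (X ⊕ E)) :
    X → Option (X ⊕ E) := fun x =>
  match h x with
  | some (Sum.inl x') => f x'
  | r => r

/-- The flat pointwise order on `X → Option (X ⊕ E)`: `f ≤ g` iff for every
`x`, `f x = ⊥` or `f x = g x`. -/
def IterLE {X E : Type*} (f g : X → Option (X ⊕ E)) : Prop :=
  ∀ x, f x = none ∨ f x = g x

/-- The explicitly recursive iteration `iter'`, tracking the visited set `M`. -/
def iter' {X E : Type*} [Fintype X] [DecidableEq X] (h : X → Option (X ⊕ E))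
    (M : Finset X) (x : X) : Option E :=
  if hx : x ∈ M then none
  else
    match h x with
    | none => none
    | some (Sum.inr e) => some e
    | some (Sum.inl x') => iter' h (insert x M) x'
termination_by Fintype.card X - M.card
decreasing_by
  have h1 : (insert x M).card = M.card + 1 := Finset.card_insert_of_notMem hx
  have h2 : (insert x M).card ≤ Fintype.card X := Finset.card_le_univ _
  omega

/-- `iter(h)` (the least fixed point of the iteration
functional) agrees with the explicitly recursive version `iter'(h)(∅)`. -/
theorem iter_eq_iter' {X E : Type*} [Fintype X] [DecidableEq X]
    (h : X → Option (X ⊕ E)) (f : X → Option (X ⊕ E))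
    (hfix : IterF h f = f) (hleast : ∀ g, IterF h g = g → IterLE f g) :
    ∀ x, f x = (iter' h ∅ x).map Sum.inr := by
  -- Lemma E: inserting a point `z` which steps into already-visited territory
  -- does not change `iter'`.
  have hE : ∀ n (M : Finset X), Fintype.card X - M.card ≤ n →
      ∀ x z w, h z = some (Sum.inl w) → w ∈ insert x M → z ∉ M →
      iter' h (insert z M) x = iter' h M x := by
    intro n
    induction n with
    | zero =>
      intro M hM x z w _ _ _
      have hMu : M = Finset.univ := by
        apply Finset.eq_univ_of_card
        have := Finset.card_le_univ M
        omega
      have hx : x ∈ M := hMu ▸ Finset.mem_univ x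
      rw [iter', iter']
      simp [hx, Finset.mem_insert_of_mem hx]
    | succ n ih =>
      intro M hM x z w hz hw hzM
      by_cases hxM : x ∈ M
      · rw [iter', iter']
        simp [hxM, Finset.mem_insert_of_mem hxM]
      · by_cases hxz : x = z
        · subst hxz
          rw [iter', iter']
          rw [dif_pos (Finset.mem_insert_self x M), dif_neg hxM]
          simp only [hz]
          rw [iter', dif_pos hw]
        · rw [iter', iter']
          have hx' : x ∉ insert z M := by
            simp [Finset.mem_insert, hxM, hxz]
          rw [dif_neg hx', dif_neg hxM]
          cases hhx : h x with
          | none => rfl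
          | some v =>
            cases v with
            | inr e => rfl
            | inl x'' =>
              simp only
              have hcomm : insert x (insert z M) = insert z (insert x M) :=
                Finset.insert_comm x z M
              rw [hcomm]
              have hcard : (insert x M).card = M.card + 1 :=
                Finset.card_insert_of_notMem hxM
              refine ih (insert x M) (by omega) x'' z w hz ?_ ?_
              · rcases Finset.mem_insert.mp hw with h1 | h2
                · exact Finset.mem_insert_of_mem (h1 ▸ Finset.mem_insert_self x M)
                · exact Finset.mem_insert_of_mem (Finset.mem_insert_of_mem h2)
              · simp only [Finset.mem_insert, not_or]
                exact ⟨fun hh => hxz hh.symm, hzM⟩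
  -- Lemma L1: if iter' terminates with result e, then f x = some (inr e).
  have L1 : ∀ n (M : Finset X), Fintype.card X - M.card ≤ n →
      ∀ x e, iter' h M x = some e → f x = some (Sum.inr e) := by
    intro n
    induction n with
    | zero =>
      intro M hM x e hit
      have hMu : M = Finset.univ := by
        apply Finset.eq_univ_of_card
        have := Finset.card_le_univ M
        omega
      have hx : x ∈ M := hMu ▸ Finset.mem_univ x
      rw [iter'] at hit
      simp [hx] at hit
    | succ n ih =>
      intro M hM x e hit
      rw [iter'] at hit
      by_cases hxM : x ∈ M
      · simp [hxM] at hit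
      · rw [dif_neg hxM] at hit
        have hfx : f x = IterF h f x := by rw [hfix]
        cases hhx : h x with
        | none => rw [hhx] at hit; exact absurd hit (by simp)
        | some v =>
          cases v with
          | inr e' =>
            rw [hhx] at hit
            simp only [Option.some.injEq] at hit
            rw [hfx]
            unfold IterF
            rw [hhx, hit]
          | inl x' =>
            rw [hhx] at hit
            have hcard : (insert x M).card = M.card + 1 :=
              Finset.card_insert_of_notMem hxM
            have := ih (insert x M) (by omega) x' e hit
            rw [hfx]
            unfold IterF
            rw [hhx]
            exact this
  -- g := iter' h ∅ mapped into Option (X ⊕ E) is a fixed point of IterF.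
  set g : X → Option (X ⊕ E) := fun x => (iter' h ∅ x).map Sum.inr with hg
  have hgfix : IterF h g = g := by
    funext x
    unfold IterF
    cases hhx : h x with
    | none =>
      simp only [hg]
      rw [iter']
      simp [hhx]
    | some v =>
      cases v with
      | inr e =>
        simp only [hg]
        rw [iter']
        simp [hhx]
      | inl x' =>
        simp only [hg]
        conv_rhs => rw [iter']
        simp only [Finset.notMem_empty, dite_false, hhx]
        have : iter' h (insert x ∅) x' = iter' h ∅ x' :=
          hE (Fintype.card X) ∅ (by simp) x' x x' hhx (Finset.mem_insert_self _ _)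
            (Finset.notMem_empty x)
        rw [this]
  intro x
  rcases hleast g hgfix x with hnone | heq
  · rw [hnone]
    cases hit : iter' h ∅ x with
    | none => simp
    | some e =>
      have := L1 (Fintype.card X) ∅ (by simp) x e hit
      rw [hnone] at this
      exact absurd this (by simp)
  · exact heq
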